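/- (Sup-norm Bellman residual bound for Peng's Q(λ) with behavior policy updates.) Fix λ ∈ [0,1] and α ∈ [1−λ, 1]. Let μ_{−1} be an arbitrary policy and Q_0 : X → A → ℝ arbitrary. For each k ≥ 0, let π_k be any policy greedy with respect to Q_k, set μ_k := α π_k + (1−α) μ_{k−1}, and define Q_{k+1} := N_λ^{μ_k,π_k} Q_k + ε_k for arbitrary error functions ε_k : X → A → ℝ. Write ρ_l := λμ_l + (1−λ)π_l, b_l := Q_l − T^{ρ_l} Q_l, and β := γ(1−λ)/(1−γλ). Then for every k ≥ 0, b_k ≤ (β^k ‖b_0‖∞ + (1+γ)·∑_{l=0}^{k−1} β^{k−l−1} ‖ε_l‖∞)·𝟙 pointwise. -/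

import Mathlib

open scoped BigOperators

namespace RLPQL

variable {X A : Type*} [Fintype X] [Fintype A]

/-- `P` is a transition kernel: nonnegative and rows sum to one. -/
def IsKernel (P : X → A → X → ℝ) : Prop :=
  (∀ x a y, 0 ≤ P x a y) ∧ ∀ x a, ∑ y, P x a y = 1

/-- `π` is a (Markov) policy: nonnegative and sums to one over actions. -/
def IsPolicy (π : X → A → ℝ) : Prop :=
  (∀ x a, 0 ≤ π x a) ∧ ∀ x, ∑ a, π x a = 1

/-- `(πQ)(x) = ∑_a π x a * Q x a`. -/
def polQ (π Q : X → A → ℝ) : X → ℝ := fun x => ∑ a, π x a * Q x a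

/-- `(PV)(x,a) = ∑_y P x a y * V y`. -/
def PV (P : X → A → X → ℝ) (V : X → ℝ) : X → A → ℝ := fun x a => ∑ y, P x a y * V y

/-- `P^π Q = P (π Q)`. -/
def Ppol (P : X → A → X → ℝ) (π Q : X → A → ℝ) : X → A → ℝ := PV P (polQ π Q)

/-- Bellman operator `T^π Q = r + γ P^π Q`. -/
def bellman (P : X → A → X → ℝ) (r : X → A → ℝ) (γ : ℝ) (π Q : X → A → ℝ) : X → A → ℝ :=
  fun x a => r x a + γ * Ppol P π Q x a

/-- Bellman optimality operator `(T Q)(x,a) = r x a + γ ∑_y P x a y * max_b Q y b`. -/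
noncomputable def optBellman (P : X → A → X → ℝ) (r : X → A → ℝ) (γ : ℝ) (Q : X → A → ℝ) :
    X → A → ℝ :=
  fun x a => r x a + γ * ∑ y, P x a y * (⨆ b, Q y b)

/-- `π` is greedy with respect to `Q`. -/
def IsGreedy (π Q : X → A → ℝ) : Prop := ∀ x, polQ π Q x = ⨆ a, Q x a

/-- `(I - c P^μ)⁻¹ f = ∑_{t=0}^∞ c^t (P^μ)^t f`. -/
noncomputable def resolvent (P : X → A → X → ℝ) (c : ℝ) (μ : X → A → ℝ) (f : X → A → ℝ) :
    X → A → ℝ :=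
  fun x a => ∑' t : ℕ, c ^ t * ((Ppol P μ)^[t] f) x a

/-- Peng's Q(λ) operator `N_λ^{μ,π} Q = (I - γλ P^μ)⁻¹ (r + γ(1-λ) P^π Q)`. -/
noncomputable def peng (P : X → A → X → ℝ) (r : X → A → ℝ) (γ lam : ℝ) (μ π Q : X → A → ℝ) :
    X → A → ℝ :=
  resolvent P (γ * lam) μ (fun x a => r x a + γ * (1 - lam) * Ppol P π Q x a)

/-- The mixture policy `c·μ + (1-c)·π`. -/
def mixP (c : ℝ) (μ π : X → A → ℝ) : X → A → ℝ := fun x a => c * μ x a + (1 - c) * π x a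

end RLPQL

open RLPQL

namespace RLPQLAux

variable {X A : Type*} [Fintype X] [Fintype A]

lemma wsum_le {ι : Type*} [Fintype ι] {w f : ι → ℝ} {C : ℝ}
    (hw : ∀ i, 0 ≤ w i) (hw1 : ∑ i, w i = 1) (h : ∀ i, f i ≤ C) :
    ∑ i, w i * f i ≤ C := by
  calc ∑ i, w i * f i ≤ ∑ i, w i * C :=
        Finset.sum_le_sum fun i _ => mul_le_mul_of_nonneg_left (h i) (hw i)
    _ = C := by rw [← Finset.sum_mul, hw1, one_mul]

lemma le_wsum {ι : Type*} [Fintype ι] {w f : ι → ℝ} {C : ℝ}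
    (hw : ∀ i, 0 ≤ w i) (hw1 : ∑ i, w i = 1) (h : ∀ i, C ≤ f i) :
    C ≤ ∑ i, w i * f i := by
  calc C = ∑ i, w i * C := by rw [← Finset.sum_mul, hw1, one_mul]
    _ ≤ ∑ i, w i * f i :=
        Finset.sum_le_sum fun i _ => mul_le_mul_of_nonneg_left (h i) (hw i)

lemma abs_wsum_le {ι : Type*} [Fintype ι] {w f : ι → ℝ} {C : ℝ}
    (hw : ∀ i, 0 ≤ w i) (hw1 : ∑ i, w i = 1) (h : ∀ i, |f i| ≤ C) :
    |∑ i, w i * f i| ≤ C := by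
  rw [abs_le]
  exact ⟨le_wsum hw hw1 fun i => (abs_le.1 (h i)).1,
    wsum_le hw hw1 fun i => (abs_le.1 (h i)).2⟩

variable {P : X → A → X → ℝ} {μ π : X → A → ℝ}

lemma Ppol_le (hP : IsKernel P) (hμ : IsPolicy μ) {f : X → A → ℝ} {C : ℝ}
    (h : ∀ x a, f x a ≤ C) : ∀ x a, Ppol P μ f x a ≤ C := fun x a =>
  wsum_le (hP.1 x a) (hP.2 x a) fun y => wsum_le (hμ.1 y) (hμ.2 y) (h y)

lemma le_Ppol (hP : IsKernel P) (hμ : IsPolicy μ) {f : X → A → ℝ} {C : ℝ}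
    (h : ∀ x a, C ≤ f x a) : ∀ x a, C ≤ Ppol P μ f x a := fun x a =>
  le_wsum (hP.1 x a) (hP.2 x a) fun y => le_wsum (hμ.1 y) (hμ.2 y) (h y)

lemma abs_Ppol_le (hP : IsKernel P) (hμ : IsPolicy μ) {f : X → A → ℝ} {C : ℝ}
    (h : ∀ x a, |f x a| ≤ C) : ∀ x a, |Ppol P μ f x a| ≤ C := fun x a =>
  abs_wsum_le (hP.1 x a) (hP.2 x a) fun y => abs_wsum_le (hμ.1 y) (hμ.2 y) (h y)

lemma Ppol_lin (s t : ℝ) (f g : X → A → ℝ) :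
    Ppol P μ (fun x a => s * f x a + t * g x a)
      = fun x a => s * Ppol P μ f x a + t * Ppol P μ g x a := by
  funext x a
  simp only [Ppol, PV, polQ, mul_add, Finset.sum_add_distrib, Finset.mul_sum]
  congr 1 <;>
    exact Finset.sum_congr rfl fun y _ => Finset.sum_congr rfl fun b _ => by ring


lemma Ppol_sub_mul (c : ℝ) (f g : X → A → ℝ) :
    Ppol P μ (fun x a => f x a - c * g x a)
      = fun x a => Ppol P μ f x a - c * Ppol P μ g x a := by
  funext x a
  simp only [Ppol, PV, polQ, mul_sub, Finset.sum_sub_distrib, Finset.mul_sum]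
  congr 1 <;>
    exact Finset.sum_congr rfl fun y _ => Finset.sum_congr rfl fun b _ => by ring

lemma Ppol_mul (c : ℝ) (f : X → A → ℝ) :
    Ppol P μ (fun x a => c * f x a) = fun x a => c * Ppol P μ f x a := by
  funext x a
  simp only [Ppol, PV, polQ, Finset.mul_sum]
  exact Finset.sum_congr rfl fun y _ =>
    Finset.sum_congr rfl fun b _ => by ring

lemma iter_sub_mul (c : ℝ) (f g : X → A → ℝ) (n : ℕ) :
    (Ppol P μ)^[n] (fun x a => f x a - c * g x a)
      = fun x a => ((Ppol P μ)^[n] f) x a - c * ((Ppol P μ)^[n] g) x a := by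
  induction n with
  | zero => simp
  | succ n ih => rw [Function.iterate_succ_apply', ih, Ppol_sub_mul,
      Function.iterate_succ_apply', Function.iterate_succ_apply']

lemma iter_abs_le (hP : IsKernel P) (hμ : IsPolicy μ) {f : X → A → ℝ} {C : ℝ}
    (h : ∀ x a, |f x a| ≤ C) : ∀ n x a, |((Ppol P μ)^[n] f) x a| ≤ C := by
  intro n
  induction n with
  | zero => simpa using h
  | succ n ih => rw [Function.iterate_succ_apply']; exact abs_Ppol_le hP hμ ih

lemma iter_le (hP : IsKernel P) (hμ : IsPolicy μ) {f : X → A → ℝ} {C : ℝ}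
    (h : ∀ x a, f x a ≤ C) : ∀ n x a, ((Ppol P μ)^[n] f) x a ≤ C := by
  intro n
  induction n with
  | zero => simpa using h
  | succ n ih => rw [Function.iterate_succ_apply']; exact Ppol_le hP hμ ih

lemma abs_apply_le_norm (f : X → A → ℝ) (x : X) (a : A) : |f x a| ≤ ‖f‖ :=
  le_trans (le_of_eq (Real.norm_eq_abs _).symm)
    (le_trans (norm_le_pi_norm (f x) a) (norm_le_pi_norm f x))

lemma summable_res (hP : IsKernel P) (hμ : IsPolicy μ) {c : ℝ}
    (hc0 : 0 ≤ c) (hc1 : c < 1) (f : X → A → ℝ) (x : X) (a : A) :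
    Summable fun t : ℕ => c ^ t * ((Ppol P μ)^[t] f) x a := by
  apply Summable.of_norm_bounded (g := fun t => ‖f‖ * c ^ t)
    ((summable_geometric_of_lt_one hc0 hc1).mul_left _)
  intro t
  rw [Real.norm_eq_abs, abs_mul, abs_pow, abs_of_nonneg hc0, mul_comm]
  exact mul_le_mul_of_nonneg_right
    (iter_abs_le hP hμ (abs_apply_le_norm f) t x a) (pow_nonneg hc0 t)

lemma resolvent_one_sub (hP : IsKernel P) (hμ : IsPolicy μ) {c : ℝ}
    (hc0 : 0 ≤ c) (hc1 : c < 1) (h : X → A → ℝ) (x : X) (a : A) :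
    resolvent P c μ (fun x a => h x a - c * Ppol P μ h x a) x a = h x a := by
  set u : ℕ → ℝ := fun t => c ^ t * ((Ppol P μ)^[t] h) x a with hu
  have hsum : Summable u := summable_res hP hμ hc0 hc1 h x a
  have hsum' : Summable fun t => u (t + 1) := (summable_nat_add_iff 1).2 hsum
  have key : ∀ t : ℕ,
      c ^ t * ((Ppol P μ)^[t] (fun x a => h x a - c * Ppol P μ h x a)) x a
        = u t - u (t + 1) := by
    intro t
    rw [iter_sub_mul]
    have h2 : (Ppol P μ)^[t] (Ppol P μ h) = (Ppol P μ)^[t + 1] h :=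
      (Function.iterate_succ_apply (Ppol P μ) t h).symm
    rw [h2, hu]
    simp only [pow_succ]
    ring
  have h0 : ∑' t, u t = u 0 + ∑' t, u (t + 1) := Summable.tsum_eq_zero_add hsum
  calc resolvent P c μ (fun x a => h x a - c * Ppol P μ h x a) x a
      = ∑' t, (u t - u (t + 1)) := tsum_congr key
    _ = (∑' t, u t) - ∑' t, u (t + 1) := Summable.tsum_sub hsum hsum'
    _ = u 0 := by rw [h0]; ring
    _ = h x a := by simp [hu]

lemma resolvent_le (hP : IsKernel P) (hμ : IsPolicy μ) {c : ℝ}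
    (hc0 : 0 ≤ c) (hc1 : c < 1) {f : X → A → ℝ} {C : ℝ} (h : ∀ x a, f x a ≤ C) :
    ∀ x a, resolvent P c μ f x a ≤ C / (1 - c) := by
  intro x a
  have : resolvent P c μ f x a ≤ ∑' t : ℕ, c ^ t * C := by
    refine Summable.tsum_le_tsum (fun t => ?_) (summable_res hP hμ hc0 hc1 f x a)
      ((summable_geometric_of_lt_one hc0 hc1).mul_right C)
    exact mul_le_mul_of_nonneg_left (iter_le hP hμ h t x a) (pow_nonneg hc0 t)
  refine this.trans (le_of_eq ?_)
  rw [tsum_mul_right, tsum_geometric_of_lt_one hc0 hc1, inv_mul_eq_div]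

lemma resolvent_sub (hP : IsKernel P) (hμ : IsPolicy μ) {c : ℝ}
    (hc0 : 0 ≤ c) (hc1 : c < 1) (f g : X → A → ℝ) (x : X) (a : A) :
    resolvent P c μ (fun x a => f x a - g x a) x a
      = resolvent P c μ f x a - resolvent P c μ g x a := by
  have hsub : ∀ n : ℕ, (Ppol P μ)^[n] (fun x a => f x a - g x a)
      = fun x a => ((Ppol P μ)^[n] f) x a - ((Ppol P μ)^[n] g) x a := by
    intro n
    have := iter_sub_mul (P := P) (μ := μ) 1 f g n
    simpa using this
  calc resolvent P c μ (fun x a => f x a - g x a) x a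
      = ∑' t : ℕ, (c ^ t * ((Ppol P μ)^[t] f) x a - c ^ t * ((Ppol P μ)^[t] g) x a) := by
        refine tsum_congr fun t => ?_
        rw [hsub]; ring
    _ = _ := Summable.tsum_sub (summable_res hP hμ hc0 hc1 f x a) (summable_res hP hμ hc0 hc1 g x a)


lemma Ppol_resolvent (hP : IsKernel P) (hμ : IsPolicy μ) {c : ℝ}
    (hc0 : 0 ≤ c) (hc1 : c < 1) (f : X → A → ℝ) (x : X) (a : A) :
    Ppol P μ (resolvent P c μ f) x a
      = ∑' t : ℕ, c ^ t * ((Ppol P μ)^[t + 1] f) x a := by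
  have hsum : ∀ (y : X) (b : A), Summable fun t : ℕ => c ^ t * ((Ppol P μ)^[t] f) y b :=
    summable_res hP hμ hc0 hc1 f
  calc Ppol P μ (resolvent P c μ f) x a
      = ∑ y, P x a y * ∑ b, μ y b * ∑' t : ℕ, c ^ t * ((Ppol P μ)^[t] f) y b := rfl
    _ = ∑ y, P x a y * ∑ b, ∑' t : ℕ, μ y b * (c ^ t * ((Ppol P μ)^[t] f) y b) := by
        refine Finset.sum_congr rfl fun y _ => ?_
        congr 1
        exact Finset.sum_congr rfl fun b _ => (tsum_mul_left).symm
    _ = ∑ y, ∑' t : ℕ, P x a y * ∑ b, μ y b * (c ^ t * ((Ppol P μ)^[t] f) y b) := by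
        refine Finset.sum_congr rfl fun y _ => ?_
        rw [← Summable.tsum_finsetSum fun b _ => (hsum y b).mul_left _]
        exact tsum_mul_left.symm
    _ = ∑' t : ℕ, ∑ y, P x a y * ∑ b, μ y b * (c ^ t * ((Ppol P μ)^[t] f) y b) := by
        rw [← Summable.tsum_finsetSum]
        intro y _
        exact (summable_sum fun b _ => (hsum y b).mul_left (μ y b)).mul_left _
    _ = ∑' t : ℕ, c ^ t * ((Ppol P μ)^[t + 1] f) x a := by
        refine tsum_congr fun t => ?_
        rw [Function.iterate_succ_apply']
        have : Ppol P μ ((Ppol P μ)^[t] f) x a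
            = ∑ y, P x a y * ∑ b, μ y b * ((Ppol P μ)^[t] f) y b := rfl
        rw [this, Finset.mul_sum]
        refine Finset.sum_congr rfl fun y _ => ?_
        simp only [Finset.mul_sum]
        exact Finset.sum_congr rfl fun b _ => by ring

lemma resolvent_fixed (hP : IsKernel P) (hμ : IsPolicy μ) {c : ℝ}
    (hc0 : 0 ≤ c) (hc1 : c < 1) (f : X → A → ℝ) (x : X) (a : A) :
    resolvent P c μ f x a = f x a + c * Ppol P μ (resolvent P c μ f) x a := by
  set u : ℕ → ℝ := fun t => c ^ t * ((Ppol P μ)^[t] f) x a with hu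
  have hsum : Summable u := summable_res hP hμ hc0 hc1 f x a
  have h1 : c * Ppol P μ (resolvent P c μ f) x a = ∑' t : ℕ, u (t + 1) := by
    rw [Ppol_resolvent hP hμ hc0 hc1, ← tsum_mul_left]
    refine tsum_congr fun t => ?_
    simp only [hu, pow_succ]
    ring
  have h2 : resolvent P c μ f x a = ∑' t, u t := rfl
  rw [h1, h2, Summable.tsum_eq_zero_add hsum]
  simp [hu]


lemma Ppol_add (f g : X → A → ℝ) :
    Ppol P μ (f + g) = fun x a => Ppol P μ f x a + Ppol P μ g x a := by
  have h : (f + g) = fun x a => 1 * f x a + 1 * g x a := by funext x a; simp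
  rw [h, Ppol_lin]; simp

lemma mixP_policy {c : ℝ} (hc0 : 0 ≤ c) (hc1 : c ≤ 1)
    (hμ : IsPolicy μ) (hπ : IsPolicy π) : IsPolicy (mixP c μ π) := by
  constructor
  · intro x a
    exact add_nonneg (mul_nonneg hc0 (hμ.1 x a)) (mul_nonneg (by linarith) (hπ.1 x a))
  · intro x
    simp only [mixP, Finset.sum_add_distrib, ← Finset.mul_sum, hμ.2 x, hπ.2 x]
    ring

lemma polQ_mix (c : ℝ) (Q : X → A → ℝ) (x : X) :
    polQ (mixP c μ π) Q x = c * polQ μ Q x + (1 - c) * polQ π Q x := by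
  simp only [polQ, mixP, add_mul, Finset.sum_add_distrib, Finset.mul_sum]
  congr 1 <;> exact Finset.sum_congr rfl fun b _ => by ring

lemma Ppol_mix (c : ℝ) (Q : X → A → ℝ) (x : X) (a : A) :
    Ppol P (mixP c μ π) Q x a = c * Ppol P μ Q x a + (1 - c) * Ppol P π Q x a := by
  simp only [Ppol, PV, Finset.mul_sum]
  rw [← Finset.sum_add_distrib]
  refine Finset.sum_congr rfl fun y _ => ?_
  rw [polQ_mix]
  ring

lemma polQ_le_sup [Nonempty A] {ν : X → A → ℝ} (hν : IsPolicy ν) (Q : X → A → ℝ) (x : X) :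
    polQ ν Q x ≤ ⨆ a, Q x a :=
  wsum_le (hν.1 x) (hν.2 x) fun a =>
    le_ciSup (Set.Finite.bddAbove (Set.finite_range _)) a

lemma Q_sub_peng {r : X → A → ℝ} {γ lam : ℝ}
    (hP : IsKernel P) (hμ : IsPolicy μ)
    (hγ0 : 0 ≤ γ) (hγ1 : γ < 1) (hlam0 : 0 ≤ lam) (hlam1 : lam ≤ 1) (Q : X → A → ℝ) :
    ∀ x a, Q x a - peng P r γ lam μ π Q x a
      = resolvent P (γ * lam) μ
          (fun x a => Q x a - bellman P r γ (mixP lam μ π) Q x a) x a := by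
  have hc0 : 0 ≤ γ * lam := mul_nonneg hγ0 hlam0
  have hc1 : γ * lam < 1 := lt_of_le_of_lt (mul_le_of_le_one_right hγ0 hlam1) hγ1
  intro x a
  have hb : (fun x a => Q x a - bellman P r γ (mixP lam μ π) Q x a)
      = fun x a => (Q x a - γ * lam * Ppol P μ Q x a)
          - (r x a + γ * (1 - lam) * Ppol P π Q x a) := by
    funext x a
    have : bellman P r γ (mixP lam μ π) Q x a = r x a + γ * Ppol P (mixP lam μ π) Q x a := rfl
    rw [this, Ppol_mix]
    ring
  rw [hb, resolvent_sub hP hμ hc0 hc1, resolvent_one_sub hP hμ hc0 hc1]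
  rfl

lemma peng_residual {r : X → A → ℝ} {γ lam : ℝ}
    (hP : IsKernel P) (hμ : IsPolicy μ)
    (hγ0 : 0 ≤ γ) (hγ1 : γ < 1) (hlam0 : 0 ≤ lam) (hlam1 : lam ≤ 1) (Q : X → A → ℝ) :
    ∀ x a, peng P r γ lam μ π Q x a
        - bellman P r γ (mixP lam μ π) (peng P r γ lam μ π Q) x a
      = γ * (1 - lam)
          * Ppol P π (fun x a => Q x a - peng P r γ lam μ π Q x a) x a := by
  have hc0 : 0 ≤ γ * lam := mul_nonneg hγ0 hlam0
  have hc1 : γ * lam < 1 := lt_of_le_of_lt (mul_le_of_le_one_right hγ0 hlam1) hγ1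
  intro x a
  unfold peng
  set g : X → A → ℝ := fun x a => r x a + γ * (1 - lam) * Ppol P π Q x a with hg
  set R : X → A → ℝ := resolvent P (γ * lam) μ g with hR
  have hfix : R x a = g x a + γ * lam * Ppol P μ R x a :=
    resolvent_fixed hP hμ hc0 hc1 g x a
  have hbell : bellman P r γ (mixP lam μ π) R x a
      = r x a + γ * (lam * Ppol P μ R x a + (1 - lam) * Ppol P π R x a) := by
    have h1 : bellman P r γ (mixP lam μ π) R x a
        = r x a + γ * Ppol P (mixP lam μ π) R x a := rfl
    rw [h1, Ppol_mix]
  have hsub : Ppol P π (fun x a => Q x a - R x a) x a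
      = Ppol P π Q x a - Ppol P π R x a := by
    have h2 := Ppol_sub_mul (P := P) (μ := π) 1 Q R
    have h3 := congrFun (congrFun h2 x) a
    simpa using h3
  rw [hbell, hsub, hfix, hg]
  ring


lemma step_bound {r : X → A → ℝ} {γ lam : ℝ} {Q εf : X → A → ℝ} {C : ℝ}
    (hP : IsKernel P) (hμ : IsPolicy μ) (hπ : IsPolicy π)
    (hγ0 : 0 ≤ γ) (hγ1 : γ < 1) (hlam0 : 0 ≤ lam) (hlam1 : lam ≤ 1) (hC : 0 ≤ C)
    (hb : ∀ x a, Q x a - bellman P r γ (mixP lam μ π) Q x a ≤ C) :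
    ∀ x a, (peng P r γ lam μ π Q + εf) x a
        - bellman P r γ (mixP lam μ π) (peng P r γ lam μ π Q + εf) x a
      ≤ γ * (1 - lam) / (1 - γ * lam) * C + (1 + γ) * ‖εf‖ := by
  have hc0 : 0 ≤ γ * lam := mul_nonneg hγ0 hlam0
  have hc1 : γ * lam < 1 := lt_of_le_of_lt (mul_le_of_le_one_right hγ0 hlam1) hγ1
  have h1c : 0 < 1 - γ * lam := by linarith
  have hρ : IsPolicy (mixP lam μ π) := mixP_policy hlam0 hlam1 hμ hπ
  intro x a
  set N : X → A → ℝ := peng P r γ lam μ π Q with hN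
  have hQm : ∀ x a, Q x a - N x a ≤ C / (1 - γ * lam) := by
    intro x a
    rw [hN, Q_sub_peng hP hμ hγ0 hγ1 hlam0 hlam1 Q]
    exact resolvent_le hP hμ hc0 hc1 hb x a
  have hres : N x a - bellman P r γ (mixP lam μ π) N x a
      = γ * (1 - lam) * Ppol P π (fun x a => Q x a - N x a) x a := by
    rw [hN]
    exact peng_residual hP hμ hγ0 hγ1 hlam0 hlam1 Q x a
  have hPbound : Ppol P π (fun x a => Q x a - N x a) x a ≤ C / (1 - γ * lam) :=
    Ppol_le hP hπ hQm x a
  have hε1 : εf x a ≤ ‖εf‖ := (le_abs_self _).trans (abs_apply_le_norm εf x a)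
  have hε2 : -‖εf‖ ≤ Ppol P (mixP lam μ π) εf x a :=
    (abs_le.1 (abs_Ppol_le hP hρ (abs_apply_le_norm εf) x a)).1
  have hsplit : bellman P r γ (mixP lam μ π) (N + εf) x a
      = bellman P r γ (mixP lam μ π) N x a + γ * Ppol P (mixP lam μ π) εf x a := by
    simp only [bellman, Ppol_add]
    ring
  have h3 : γ * (1 - lam) * Ppol P π (fun x a => Q x a - N x a) x a
      ≤ γ * (1 - lam) * (C / (1 - γ * lam)) :=
    mul_le_mul_of_nonneg_left hPbound (mul_nonneg hγ0 (by linarith))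
  have h4 : γ * (-Ppol P (mixP lam μ π) εf x a) ≤ γ * ‖εf‖ :=
    mul_le_mul_of_nonneg_left (by linarith) hγ0
  have hadd : (N + εf) x a = N x a + εf x a := rfl
  have goal2 : (N + εf) x a - bellman P r γ (mixP lam μ π) (N + εf) x a
      = (N x a - bellman P r γ (mixP lam μ π) N x a)
        + (εf x a - γ * Ppol P (mixP lam μ π) εf x a) := by
    rw [hadd, hsplit]; ring
  rw [goal2, hres]
  have heq : γ * (1 - lam) / (1 - γ * lam) * C = γ * (1 - lam) * (C / (1 - γ * lam)) := by
    ring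
  rw [heq]
  linarith

lemma greedy_mono [Nonempty A] {r : X → A → ℝ} {γ lam alf : ℝ} {μk πk πk1 Q' : X → A → ℝ}
    (hP : IsKernel P)
    (hμk : IsPolicy μk) (hπk : IsPolicy πk) (hπk1 : IsPolicy πk1)
    (hgrd : IsGreedy πk1 Q')
    (hγ0 : 0 ≤ γ) (hlam0 : 0 ≤ lam) (hlam1 : lam ≤ 1) (half0 : 0 ≤ alf) :
    ∀ x a, Q' x a - bellman P r γ (mixP lam (mixP alf πk1 μk) πk1) Q' x a
      ≤ Q' x a - bellman P r γ (mixP lam μk πk) Q' x a := by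
  intro x a
  have hpol : ∀ y, polQ (mixP lam μk πk) Q' y ≤ polQ (mixP lam (mixP alf πk1 μk) πk1) Q' y := by
    intro y
    rw [polQ_mix, polQ_mix, polQ_mix, hgrd y]
    have hm : polQ μk Q' y ≤ ⨆ b, Q' y b := polQ_le_sup hμk Q' y
    have hp : polQ πk Q' y ≤ ⨆ b, Q' y b := polQ_le_sup hπk Q' y
    nlinarith [mul_nonneg (mul_nonneg hlam0 half0) (sub_nonneg.2 hm),
      mul_nonneg (sub_nonneg.2 hlam1) (sub_nonneg.2 hp)]
  have hPle : Ppol P (mixP lam μk πk) Q' x a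
      ≤ Ppol P (mixP lam (mixP alf πk1 μk) πk1) Q' x a := by
    refine Finset.sum_le_sum fun y _ => ?_
    exact mul_le_mul_of_nonneg_left (hpol y) (hP.1 x a y)
  have hbell : ∀ ν : X → A → ℝ, bellman P r γ ν Q' x a = r x a + γ * Ppol P ν Q' x a :=
    fun ν => rfl
  rw [hbell, hbell]
  have := mul_le_mul_of_nonneg_left hPle hγ0
  linarith

end RLPQLAux

open RLPQLAux

/-- Sup-norm Bellman residual bound for Peng's Q(λ) with behavior policy
updates: with `b_l := Q_l - T^{ρ_l} Q_l`, `ρ_l = λμ_l+(1-λ)π_l`, `β = γ(1-λ)/(1-γλ)`,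
`b_k ≤ (β^k ‖b_0‖∞ + (1+γ) ∑_{l<k} β^{k-l-1} ‖ε_l‖∞)·𝟙` pointwise. -/
theorem peng_supnorm_residual_bound_policy_updates {X A : Type*} [Fintype X] [Fintype A]
    [Nonempty X] [Nonempty A]
    (P : X → A → X → ℝ) (r : X → A → ℝ) (γ lam α : ℝ)
    (hP : IsKernel P) (hγ0 : 0 ≤ γ) (hγ1 : γ < 1) (hlam0 : 0 ≤ lam) (hlam1 : lam ≤ 1)
    (hα0 : 1 - lam ≤ α) (hα1 : α ≤ 1)
    (μinit : X → A → ℝ) (hμinit : IsPolicy μinit)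
    (Qseq πseq μseq : ℕ → X → A → ℝ) (ε : ℕ → X → A → ℝ)
    (hπpol : ∀ k, IsPolicy (πseq k)) (hπgreedy : ∀ k, IsGreedy (πseq k) (Qseq k))
    (hμ0 : μseq 0 = mixP α (πseq 0) μinit)
    (hμs : ∀ k, μseq (k + 1) = mixP α (πseq (k + 1)) (μseq k))
    (hrec : ∀ k, Qseq (k + 1) = peng P r γ lam (μseq k) (πseq k) (Qseq k) + ε k) :
    ∀ k : ℕ,
      Qseq k - bellman P r γ (mixP lam (μseq k) (πseq k)) (Qseq k)
        ≤ fun _ _ =>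
            (γ * (1 - lam) / (1 - γ * lam)) ^ k *
              ‖Qseq 0 - bellman P r γ (mixP lam (μseq 0) (πseq 0)) (Qseq 0)‖
            + (1 + γ) * ∑ l ∈ Finset.range k,
                (γ * (1 - lam) / (1 - γ * lam)) ^ (k - l - 1) * ‖ε l‖ := by
  have half0 : 0 ≤ α := by linarith
  have hc1 : γ * lam < 1 := lt_of_le_of_lt (mul_le_of_le_one_right hγ0 hlam1) hγ1
  have hβ0 : 0 ≤ γ * (1 - lam) / (1 - γ * lam) :=
    div_nonneg (mul_nonneg hγ0 (by linarith)) (by linarith)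
  have hμpol : ∀ k, IsPolicy (μseq k) := by
    intro k
    induction k with
    | zero => rw [hμ0]; exact mixP_policy half0 hα1 (hπpol 0) hμinit
    | succ k ih => rw [hμs k]; exact mixP_policy half0 hα1 (hπpol (k + 1)) ih
  have key : ∀ k, ∀ x a,
      Qseq k x a - bellman P r γ (mixP lam (μseq k) (πseq k)) (Qseq k) x a
        ≤ (γ * (1 - lam) / (1 - γ * lam)) ^ k *
              ‖Qseq 0 - bellman P r γ (mixP lam (μseq 0) (πseq 0)) (Qseq 0)‖
            + (1 + γ) * ∑ l ∈ Finset.range k,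
                (γ * (1 - lam) / (1 - γ * lam)) ^ (k - l - 1) * ‖ε l‖ := by
    intro k
    induction k with
    | zero =>
      intro x a
      simp only [pow_zero, one_mul, Finset.range_zero, Finset.sum_empty, mul_zero, add_zero]
      have h1 := abs_apply_le_norm
        (Qseq 0 - bellman P r γ (mixP lam (μseq 0) (πseq 0)) (Qseq 0)) x a
      have h2 : (Qseq 0 - bellman P r γ (mixP lam (μseq 0) (πseq 0)) (Qseq 0)) x a
          = Qseq 0 x a - bellman P r γ (mixP lam (μseq 0) (πseq 0)) (Qseq 0) x a := rfl
      rw [h2] at h1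
      exact (abs_le.1 h1).2
    | succ k ih =>
      intro x a
      have hC0 : 0 ≤ (γ * (1 - lam) / (1 - γ * lam)) ^ k *
              ‖Qseq 0 - bellman P r γ (mixP lam (μseq 0) (πseq 0)) (Qseq 0)‖
            + (1 + γ) * ∑ l ∈ Finset.range k,
                (γ * (1 - lam) / (1 - γ * lam)) ^ (k - l - 1) * ‖ε l‖ :=
        add_nonneg (mul_nonneg (pow_nonneg hβ0 k) (norm_nonneg _))
          (mul_nonneg (by linarith)
            (Finset.sum_nonneg fun l _ => mul_nonneg (pow_nonneg hβ0 _) (norm_nonneg _)))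
      have h1 : Qseq (k + 1) x a
            - bellman P r γ (mixP lam (μseq (k + 1)) (πseq (k + 1))) (Qseq (k + 1)) x a
          ≤ Qseq (k + 1) x a
            - bellman P r γ (mixP lam (μseq k) (πseq k)) (Qseq (k + 1)) x a := by
        rw [hμs k]
        exact greedy_mono hP (hμpol k) (hπpol k) (hπpol (k + 1)) (hπgreedy (k + 1))
          hγ0 hlam0 hlam1 half0 x a
      have h2 : Qseq (k + 1) x a
            - bellman P r γ (mixP lam (μseq k) (πseq k)) (Qseq (k + 1)) x a
          ≤ γ * (1 - lam) / (1 - γ * lam) *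
              ((γ * (1 - lam) / (1 - γ * lam)) ^ k *
                ‖Qseq 0 - bellman P r γ (mixP lam (μseq 0) (πseq 0)) (Qseq 0)‖
              + (1 + γ) * ∑ l ∈ Finset.range k,
                  (γ * (1 - lam) / (1 - γ * lam)) ^ (k - l - 1) * ‖ε l‖)
            + (1 + γ) * ‖ε k‖ := by
        rw [hrec k]
        exact step_bound hP (hμpol k) (hπpol k) hγ0 hγ1 hlam0 hlam1 hC0 ih x a
      refine le_trans h1 (le_trans h2 (le_of_eq ?_))
      rw [Finset.sum_range_succ]
      have hsum : ∑ l ∈ Finset.range k,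
            (γ * (1 - lam) / (1 - γ * lam)) ^ (k + 1 - l - 1) * ‖ε l‖
          = ∑ l ∈ Finset.range k,
            γ * (1 - lam) / (1 - γ * lam) *
              ((γ * (1 - lam) / (1 - γ * lam)) ^ (k - l - 1) * ‖ε l‖) := by
        refine Finset.sum_congr rfl fun l hl => ?_
        have hlk : l < k := Finset.mem_range.1 hl
        have he : k + 1 - l - 1 = (k - l - 1) + 1 := by omega
        rw [he, pow_succ]
        ring
      rw [hsum, show k + 1 - k - 1 = 0 by omega, pow_zero, pow_succ, ← Finset.mul_sum]
      ring
  intro k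
  intro x a
  exact key k x a
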